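/- (Corollary 2, hyperprior equivalence.) The pushforward under the squaring map s ↦ s² of the standard half-Cauchy measure C⁺(0,1) (density s ↦ 2/(π(1+s²)) on (0,∞)) is the measure on (0,∞) with Lebesgue density φ ↦ ∫₀^∞ gammaPDF(1/2, ω)(φ) · gammaPDF(1/2, 1)(ω) dω = 1/(π √φ (1+φ)). That is, φ^(1/2) ~ C⁺(0,1) if and only if φ ~ Gamma(1/2, ω) mixed over ω ~ Gamma(1/2, 1). -/

import Mathlib

open MeasureTheory Real

/-- The Gamma density with shape `μ` and rate `ν`, for positive arguments. -/
noncomputable def gammaPDF (μ ν x : ℝ) : ℝ :=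
  ν ^ μ * x ^ (μ - 1) * Real.exp (-ν * x) / Real.Gamma μ

lemma exp_integral_rate {b : ℝ} (hb : 0 < b) :
    ∫ x in Set.Ioi (0 : ℝ), Real.exp (-b * x) = b⁻¹ := by
  have h := integral_exp_neg_mul_rpow (p := 1) (b := b) one_pos hb
  simp only [Real.rpow_one] at h
  rw [h]
  norm_num [Real.Gamma_two, Real.rpow_neg_one]

lemma mixture_density (φ : ℝ) (hφ : 0 < φ) :
    ∫ ω in Set.Ioi (0 : ℝ), gammaPDF (1 / 2) ω φ * gammaPDF (1 / 2) 1 ω =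
      1 / (Real.pi * Real.sqrt φ * (1 + φ)) := by
  have hπ : (0 : ℝ) < Real.pi := Real.pi_pos
  have hb : (0 : ℝ) < 1 + φ := by linarith
  have hsq : Real.sqrt Real.pi * Real.sqrt Real.pi = Real.pi :=
    Real.mul_self_sqrt hπ.le
  have h1 : ∫ ω in Set.Ioi (0 : ℝ), gammaPDF (1 / 2) ω φ * gammaPDF (1 / 2) 1 ω =
      ∫ ω in Set.Ioi (0 : ℝ),
        (φ ^ (-(1 : ℝ) / 2) / Real.pi) * Real.exp (-(1 + φ) * ω) := by
    refine setIntegral_congr_fun measurableSet_Ioi fun ω hω => ?_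
    have hω' : (0 : ℝ) < ω := hω
    have e1 : ω ^ ((1 : ℝ) / 2) * ω ^ ((1 : ℝ) / 2 - 1) = 1 := by
      rw [← Real.rpow_add hω']
      norm_num
    have e2 : Real.exp (-ω * φ) * Real.exp (-1 * ω) = Real.exp (-(1 + φ) * ω) := by
      rw [← Real.exp_add]
      ring_nf
    have e3 : φ ^ ((1 : ℝ) / 2 - 1) = φ ^ (-(1 : ℝ) / 2) := by norm_num
    have e4 : (ω ^ ((1 : ℝ) / 2) * φ ^ ((1 : ℝ) / 2 - 1) * Real.exp (-ω * φ)) *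
        ((1 : ℝ) ^ ((1 : ℝ) / 2) * ω ^ ((1 : ℝ) / 2 - 1) * Real.exp (-1 * ω)) =
        (ω ^ ((1 : ℝ) / 2) * ω ^ ((1 : ℝ) / 2 - 1)) * (φ ^ ((1 : ℝ) / 2 - 1) *
          (Real.exp (-ω * φ) * Real.exp (-1 * ω))) := by
      rw [Real.one_rpow]
      ring
    simp only [gammaPDF, Real.Gamma_one_half_eq]
    rw [div_mul_div_comm, hsq, e4, e1, one_mul, e2, e3]
    ring
  rw [h1, MeasureTheory.integral_const_mul, exp_integral_rate hb]
  have hneg : φ ^ (-(1 : ℝ) / 2) = (Real.sqrt φ)⁻¹ := by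
    rw [Real.sqrt_eq_rpow, neg_div, Real.rpow_neg hφ.le]
  rw [hneg, one_div, mul_inv, mul_inv, div_eq_mul_inv]
  ring

lemma sq_image (A : Set ℝ) :
    (fun s : ℝ => s ^ 2) '' ((fun s : ℝ => s ^ 2) ⁻¹' A ∩ Set.Ioi 0) = A ∩ Set.Ioi 0 := by
  ext x
  constructor
  · rintro ⟨s, ⟨hsA, hs⟩, rfl⟩
    exact ⟨hsA, show (0:ℝ) < s ^ 2 from pow_pos hs 2⟩
  · rintro ⟨hxA, hx⟩
    have hx' : (0 : ℝ) < x := hx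
    refine ⟨Real.sqrt x, ⟨?_, Real.sqrt_pos.mpr hx'⟩, Real.sq_sqrt hx'.le⟩
    simp only [Set.mem_preimage, Real.sq_sqrt hx'.le]
    exact hxA

/-- Corollary 2, hyperprior equivalence: φ^(1/2) ~ C⁺(0,1) iff φ ~ Gamma(1/2, ω) mixed over
ω ~ Gamma(1/2, 1); the mixture density is 1/(π √φ (1+φ)). -/
theorem half_cauchy_hyperprior_equivalence :
    (∀ φ : ℝ, 0 < φ →
      ∫ ω in Set.Ioi (0 : ℝ), gammaPDF (1 / 2) ω φ * gammaPDF (1 / 2) 1 ω =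
        1 / (Real.pi * Real.sqrt φ * (1 + φ))) ∧
    Measure.map (fun s : ℝ => s ^ 2)
        ((volume.restrict (Set.Ioi (0 : ℝ))).withDensity fun s =>
          ENNReal.ofReal (2 / (Real.pi * (1 + s ^ 2)))) =
      (volume.restrict (Set.Ioi (0 : ℝ))).withDensity fun φ =>
        ENNReal.ofReal (1 / (Real.pi * Real.sqrt φ * (1 + φ))) := by
  refine ⟨mixture_density, ?_⟩
  have hmeas : Measurable fun s : ℝ => s ^ 2 := measurable_id.pow_const 2
  ext A hA
  rw [Measure.map_apply hmeas hA,
    withDensity_apply _ (hmeas hA),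
    withDensity_apply _ hA,
    Measure.restrict_restrict (hmeas hA),
    Measure.restrict_restrict hA]
  set S : Set ℝ := (fun s : ℝ => s ^ 2) ⁻¹' A ∩ Set.Ioi 0 with hS
  have hSmeas : MeasurableSet S := (hmeas hA).inter measurableSet_Ioi
  have hderiv : ∀ x ∈ S, HasFDerivWithinAt (fun s : ℝ => s ^ 2)
      ((1 : ℝ →L[ℝ] ℝ).smulRight (2 * x)) S x := by
    intro x _
    have h : HasDerivAt (fun s : ℝ => s ^ 2) (2 * x) x := by
      simpa using hasDerivAt_pow 2 x
    exact h.hasDerivWithinAt.hasFDerivWithinAt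
  have hinj : Set.InjOn (fun s : ℝ => s ^ 2) S := by
    intro a ha b hb hab
    have ha' : (0 : ℝ) < a := ha.2
    have hb' : (0 : ℝ) < b := hb.2
    have hab' : a ^ 2 = b ^ 2 := hab
    have : Real.sqrt (a ^ 2) = Real.sqrt (b ^ 2) := by rw [hab']
    rwa [Real.sqrt_sq ha'.le, Real.sqrt_sq hb'.le] at this
  have key := lintegral_image_eq_lintegral_abs_det_fderiv_mul volume hSmeas hderiv hinj
    (fun φ => ENNReal.ofReal (1 / (Real.pi * Real.sqrt φ * (1 + φ))))
  rw [sq_image A] at key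
  rw [key]
  refine setLIntegral_congr_fun hSmeas (fun x hx => ?_)
  have hx' : (0 : ℝ) < x := hx.2
  have hπ : (0 : ℝ) < Real.pi := Real.pi_pos
  rw [ContinuousLinearMap.smulRight_one_eq_toSpanSingleton, ContinuousLinearMap.det_toSpanSingleton]
  rw [abs_of_nonneg (by positivity : (0:ℝ) ≤ 2 * x),
    ← ENNReal.ofReal_mul (by positivity : (0:ℝ) ≤ 2 * x)]
  congr 1
  rw [Real.sqrt_sq hx'.le]
  have h1x : (0 : ℝ) < 1 + x ^ 2 := by positivity
  field_simp
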